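/- Let τ > 0, M > 0 and ε > 0, and let g be a Borel probability measure on ℝ whose support is contained in [−M, M]. Then there exists S₀ ≥ 2 such that for every integer S ≥ S₀ there exist nonnegative weights θ_1, …, θ_S with ∑_{j=1}^S θ_j = 1 such that, with grid points u_j = −M + 2M(j−1)/(S−1) for j = 1, …, S, one has sup_{x ∈ ℝ} | ∫ φ_τ(x − u) dg(u) − ∑_{j=1}^S θ_j φ_τ(x − u_j) |² < ε. -/

import Mathlib

open MeasureTheory

noncomputable def gaussDensity (τ x : ℝ) : ℝ :=
  (τ * Real.sqrt (2 * Real.pi))⁻¹ * Real.exp (-(x ^ 2) / (2 * τ ^ 2))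

lemma gaussDensity_pos {τ : ℝ} (hτ : 0 < τ) (x : ℝ) : 0 < gaussDensity τ x := by
  have h2π : 0 < Real.sqrt (2 * Real.pi) := Real.sqrt_pos.mpr (by positivity)
  exact mul_pos (inv_pos.mpr (by positivity)) (Real.exp_pos _)

lemma gaussDensity_le {τ : ℝ} (hτ : 0 < τ) (x : ℝ) :
    gaussDensity τ x ≤ (τ * Real.sqrt (2 * Real.pi))⁻¹ := by
  have h2π : 0 < Real.sqrt (2 * Real.pi) := Real.sqrt_pos.mpr (by positivity)
  have : Real.exp (-(x ^ 2) / (2 * τ ^ 2)) ≤ 1 := by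
    rw [Real.exp_le_one_iff]
    have : (0:ℝ) ≤ x ^ 2 := sq_nonneg x
    have : (0:ℝ) < 2 * τ ^ 2 := by positivity
    apply div_nonpos_of_nonpos_of_nonneg <;> nlinarith [sq_nonneg x]
  calc gaussDensity τ x ≤ (τ * Real.sqrt (2 * Real.pi))⁻¹ * 1 := by
        unfold gaussDensity
        apply mul_le_mul_of_nonneg_left this (by positivity)
    _ = _ := mul_one _

lemma gaussDensity_lipschitz {τ : ℝ} (hτ : 0 < τ) (a b : ℝ) :
    |gaussDensity τ a - gaussDensity τ b| ≤ (τ ^ 2 * Real.sqrt (2 * Real.pi))⁻¹ * |a - b| := by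
  have h2π : 0 < Real.sqrt (2 * Real.pi) := Real.sqrt_pos.mpr (by positivity)
  set c : ℝ := (τ * Real.sqrt (2 * Real.pi))⁻¹ with hc
  have hcpos : 0 < c := by positivity
  set f' : ℝ → ℝ := fun x => c * (Real.exp (-(x ^ 2) / (2 * τ ^ 2)) * (-(2 * x ^ 1) / (2 * τ ^ 2))) with hf'
  have hder : ∀ x ∈ (Set.univ : Set ℝ), HasDerivWithinAt (gaussDensity τ) (f' x) Set.univ x := by
    intro x _
    have h1 : HasDerivAt (fun x : ℝ => -(x ^ 2) / (2 * τ ^ 2)) (-(2 * x ^ 1) / (2 * τ ^ 2)) x :=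
      ((hasDerivAt_pow 2 x).neg).div_const _
    have h2 := h1.exp
    have h3 := h2.const_mul c
    exact h3.hasDerivWithinAt
  have hbound : ∀ x ∈ (Set.univ : Set ℝ), ‖f' x‖ ≤ (τ ^ 2 * Real.sqrt (2 * Real.pi))⁻¹ := by
    intro x _
    have hkey : Real.exp (-(x ^ 2) / (2 * τ ^ 2)) * |x| ≤ τ := by
      have hE : Real.exp (-(x ^ 2) / (2 * τ ^ 2)) * Real.exp (x ^ 2 / (2 * τ ^ 2)) = 1 := by
        rw [← Real.exp_add]
        rw [show -(x ^ 2) / (2 * τ ^ 2) + x ^ 2 / (2 * τ ^ 2) = 0 by ring, Real.exp_zero]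
      have hge := Real.add_one_le_exp (x ^ 2 / (2 * τ ^ 2))
      have hEpos := Real.exp_pos (-(x ^ 2) / (2 * τ ^ 2))
      have ht2 : (0:ℝ) < 2 * τ ^ 2 := by positivity
      have h4 : Real.exp (-(x ^ 2) / (2 * τ ^ 2)) * (x ^ 2 / (2 * τ ^ 2) + 1) ≤ 1 := by
        calc Real.exp (-(x ^ 2) / (2 * τ ^ 2)) * (x ^ 2 / (2 * τ ^ 2) + 1)
            ≤ Real.exp (-(x ^ 2) / (2 * τ ^ 2)) * Real.exp (x ^ 2 / (2 * τ ^ 2)) :=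
              mul_le_mul_of_nonneg_left hge hEpos.le
          _ = 1 := hE
      have h5 := mul_le_mul_of_nonneg_right h4 ht2.le
      have h6 : Real.exp (-(x ^ 2) / (2 * τ ^ 2)) * (x ^ 2 / (2 * τ ^ 2) + 1) * (2 * τ ^ 2)
          = Real.exp (-(x ^ 2) / (2 * τ ^ 2)) * x ^ 2 + 2 * τ ^ 2 * Real.exp (-(x ^ 2) / (2 * τ ^ 2)) := by
        field_simp
      rw [h6] at h5
      nlinarith [h5, mul_nonneg hEpos.le (sq_nonneg (|x| - τ)), hEpos.le, sq_abs x, hτ, mul_pos hτ hτ]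
    have h1 : ‖f' x‖ = c * (Real.exp (-(x ^ 2) / (2 * τ ^ 2)) * |x|) / τ ^ 2 := by
      rw [hf']
      rw [Real.norm_eq_abs, abs_mul, abs_of_pos hcpos, abs_mul, abs_div,
        abs_of_pos (Real.exp_pos _)]
      rw [abs_of_pos (show (0:ℝ) < 2 * τ ^ 2 by positivity)]
      rw [abs_neg, abs_mul, abs_of_pos (show (0:ℝ) < 2 by norm_num), pow_one]
      ring
    rw [h1]
    have h2 : c * (Real.exp (-(x ^ 2) / (2 * τ ^ 2)) * |x|) / τ ^ 2 ≤ c * τ / τ ^ 2 := by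
      apply div_le_div_of_nonneg_right ?_ (by positivity) |>.trans_eq rfl
      · exact mul_le_mul_of_nonneg_left hkey hcpos.le
    refine h2.trans_eq ?_
    rw [hc]
    field_simp
  have := convex_univ.norm_image_sub_le_of_norm_hasDerivWithin_le hder hbound
    (Set.mem_univ b) (Set.mem_univ a)
  simpa [Real.norm_eq_abs] using this

theorem discrete_mixture_approximation
    (τ M ε : ℝ) (hτ : 0 < τ) (hM : 0 < M) (hε : 0 < ε)
    (g : Measure ℝ) [IsProbabilityMeasure g]
    (hsupp : g (Set.Icc (-M) M)ᶜ = 0) :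
    ∃ S₀ : ℕ, 2 ≤ S₀ ∧ ∀ S : ℕ, S₀ ≤ S →
      ∃ θ : Fin S → ℝ, (∀ j, 0 ≤ θ j) ∧ (∑ j, θ j = 1) ∧
        ∀ x : ℝ,
          ((∫ u, gaussDensity τ (x - u) ∂g) -
              ∑ j, θ j * gaussDensity τ (x - (-M + 2 * M * (j : ℝ) / ((S : ℝ) - 1)))) ^ 2 < ε := by
  have h2π : 0 < Real.sqrt (2 * Real.pi) := Real.sqrt_pos.mpr (by positivity)
  set C : ℝ := (τ ^ 2 * Real.sqrt (2 * Real.pi))⁻¹ with hC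
  have hCpos : 0 < C := by positivity
  have hsε : 0 < Real.sqrt ε := Real.sqrt_pos.mpr hε
  set q : ℝ := 2 * M * C / Real.sqrt ε with hq
  have hqpos : 0 < q := by positivity
  refine ⟨max 2 (⌈q⌉₊ + 2), le_max_left _ _, ?_⟩
  intro S hS
  have hS2 : 2 ≤ S := le_trans (le_max_left _ _) hS
  have hSq : (⌈q⌉₊ + 2 : ℕ) ≤ S := le_trans (le_max_right _ _) hS
  have hS1 : (1:ℝ) ≤ (S:ℝ) - 1 := by
    have : (2:ℝ) ≤ (S:ℝ) := by exact_mod_cast hS2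
    linarith
  have hSR : (0:ℝ) < (S:ℝ) - 1 := by linarith
  set δ : ℝ := 2 * M / ((S:ℝ) - 1) with hδ
  have hδpos : 0 < δ := by positivity
  -- key numeric bound : C * δ < √ε
  have hkey : C * δ < Real.sqrt ε := by
    have h1 : q < (S:ℝ) - 1 := by
      have h2 : ((⌈q⌉₊:ℝ) + 2) ≤ (S:ℝ) := by exact_mod_cast hSq
      have h3 := Nat.le_ceil q
      linarith
    have h4 : 2 * M * C < Real.sqrt ε * ((S:ℝ) - 1) := by
      have := (div_lt_iff₀ hsε).mp h1
      linarith
    have h5 : C * δ = 2 * M * C / ((S:ℝ) - 1) := by rw [hδ]; ring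
    rw [h5, div_lt_iff₀ hSR]
    linarith
  -- the rounding map
  have hSpos : 0 < S := by omega
  set r : ℝ → Fin S := fun u =>
    ⟨min (S - 1) ⌊(u + M) / δ⌋₊, lt_of_le_of_lt (min_le_left _ _) (by omega)⟩ with hr
  have hfib : ∀ j : Fin S, MeasurableSet (r ⁻¹' {j}) := by
    intro j
    have h1 : r ⁻¹' {j} = (fun u => min (S - 1) ⌊(u + M) / δ⌋₊) ⁻¹' {(j:ℕ)} := by
      ext u; simp [hr, Fin.ext_iff]
    rw [h1]
    exact (measurable_const.min
      (((measurable_id.add_const M).div_const δ).nat_floor)) (measurableSet_singleton _)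
  set θ : Fin S → ℝ := fun j => (g (r ⁻¹' {j})).toReal with hθ
  have hθsum : ∑ j, θ j = 1 := by
    have h1 : ∑ j : Fin S, g (r ⁻¹' {j}) = 1 := by
      have h2 := sum_measure_preimage_singleton (μ := g) (Finset.univ : Finset (Fin S))
        (f := r) (fun y _ => hfib y)
      simpa using h2
    rw [hθ]
    rw [← ENNReal.toReal_sum (fun a _ => measure_ne_top g _), h1, ENNReal.toReal_one]
  -- grid proximity
  have hnear : ∀ u ∈ Set.Icc (-M) M,
      |(-M + 2 * M * ((r u : Fin S) : ℝ) / ((S:ℝ) - 1)) - u| ≤ δ := by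
    intro u hu
    obtain ⟨hu1, hu2⟩ := hu
    set k : ℕ := min (S - 1) ⌊(u + M) / δ⌋₊ with hk
    have hrk : ((r u : Fin S) : ℝ) = (k : ℝ) := by rw [hr]
    have hgrid : 2 * M * ((r u : Fin S) : ℝ) / ((S:ℝ) - 1) = δ * (k : ℝ) := by
      rw [hrk, hδ]; ring
    have ht0 : 0 ≤ u + M := by linarith
    have ht2 : u + M ≤ 2 * M := by linarith
    have hk_le : (k : ℝ) * δ ≤ u + M := by
      have h1 : (k : ℝ) ≤ (⌊(u + M) / δ⌋₊ : ℝ) := by exact_mod_cast min_le_right _ _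
      have h2 : (⌊(u + M) / δ⌋₊ : ℝ) ≤ (u + M) / δ := Nat.floor_le (by positivity)
      have h3 : (k : ℝ) ≤ (u + M) / δ := le_trans h1 h2
      have := (le_div_iff₀ hδpos).mp h3
      linarith
    have hk_ge : u + M ≤ (k : ℝ) * δ + δ := by
      by_cases hcase : ⌊(u + M) / δ⌋₊ ≤ S - 1
      · have hk2 : k = ⌊(u + M) / δ⌋₊ := min_eq_right hcase
        have h4 : (u + M) / δ < (⌊(u + M) / δ⌋₊ : ℝ) + 1 := Nat.lt_floor_add_one _
        have h5 := (div_lt_iff₀ hδpos).mp h4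
        rw [hk2]
        nlinarith
      · have hk2 : k = S - 1 := min_eq_left (le_of_not_ge hcase)
        have hcast : ((S - 1 : ℕ) : ℝ) = (S:ℝ) - 1 := by
          have h1 : 1 ≤ S := by omega
          push_cast [h1]
          ring
        have hδS : ((S - 1 : ℕ) : ℝ) * δ = 2 * M := by
          rw [hcast, hδ]; field_simp
        rw [hk2, hδS]
        linarith
    rw [show (-M + 2 * M * ((r u : Fin S) : ℝ) / ((S:ℝ) - 1)) - u
      = 2 * M * ((r u : Fin S) : ℝ) / ((S:ℝ) - 1) - (u + M) by ring, hgrid]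
    rw [abs_le]
    constructor <;> [linarith; linarith]
  refine ⟨θ, fun j => ENNReal.toReal_nonneg, hθsum, ?_⟩
  intro x
  set F : Fin S → ℝ := fun j => gaussDensity τ (x - (-M + 2 * M * (j : ℝ) / ((S:ℝ) - 1))) with hF
  have hcont : Continuous (gaussDensity τ) := by
    unfold gaussDensity
    fun_prop
  set c₀ : ℝ := (τ * Real.sqrt (2 * Real.pi))⁻¹ with hc₀
  have hint1 : Integrable (fun u => gaussDensity τ (x - u)) g := by
    refine Integrable.mono' (integrable_const c₀)
      ((hcont.comp (continuous_const.sub continuous_id)).aestronglyMeasurable) ?_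
    filter_upwards with u
    rw [Real.norm_eq_abs, abs_of_nonneg (gaussDensity_pos hτ _).le]
    exact gaussDensity_le hτ _
  have hf2 : (fun u => F (r u)) = fun u => ∑ j, (r ⁻¹' {j}).indicator (fun _ => F j) u := by
    funext u
    rw [Finset.sum_eq_single (r u)]
    · rw [Set.indicator_of_mem (by simp : u ∈ r ⁻¹' {r u})]
    · intro j _ hj
      refine Set.indicator_of_notMem ?_ _
      intro h
      have h2 : r u = j := h
      exact hj h2.symm
    · intro h; exact absurd (Finset.mem_univ _) h
  have hintInd : ∀ j : Fin S, Integrable ((r ⁻¹' {j}).indicator (fun _ => F j)) g :=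
    fun j => (integrable_const (F j)).indicator (hfib j)
  have hint2 : Integrable (fun u => F (r u)) g := by
    rw [hf2]
    exact integrable_finset_sum _ (fun j _ => hintInd j)
  have hI2 : ∫ u, F (r u) ∂g = ∑ j, θ j * F j := by
    rw [hf2, integral_finset_sum _ (fun j _ => hintInd j)]
    refine Finset.sum_congr rfl (fun j _ => ?_)
    rw [integral_indicator_const _ (hfib j)]
    simp [hθ, smul_eq_mul, Measure.real]
  have hdiff : (∫ u, gaussDensity τ (x - u) ∂g) - ∑ j, θ j * F j
      = ∫ u, (gaussDensity τ (x - u) - F (r u)) ∂g := by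
    rw [← hI2, ← integral_sub hint1 hint2]
  have hae : ∀ᵐ u ∂g, u ∈ Set.Icc (-M) M := by
    rw [MeasureTheory.ae_iff]
    exact hsupp
  have hbound2 : ∀ᵐ u ∂g, ‖gaussDensity τ (x - u) - F (r u)‖ ≤ C * δ := by
    filter_upwards [hae] with u hu
    rw [Real.norm_eq_abs]
    calc |gaussDensity τ (x - u) - F (r u)|
        ≤ C * |(x - u) - (x - (-M + 2 * M * ((r u : Fin S) : ℝ) / ((S:ℝ) - 1)))| :=
          gaussDensity_lipschitz hτ _ _
      _ = C * |(-M + 2 * M * ((r u : Fin S) : ℝ) / ((S:ℝ) - 1)) - u| := by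
          rw [show (x - u) - (x - (-M + 2 * M * ((r u : Fin S) : ℝ) / ((S:ℝ) - 1)))
            = (-M + 2 * M * ((r u : Fin S) : ℝ) / ((S:ℝ) - 1)) - u by ring]
      _ ≤ C * δ := mul_le_mul_of_nonneg_left (hnear u hu) hCpos.le
  have hfinal : ‖∫ u, (gaussDensity τ (x - u) - F (r u)) ∂g‖ ≤ C * δ * (g Set.univ).toReal :=
    norm_integral_le_of_norm_le_const hbound2
  have hfinal2 : |(∫ u, gaussDensity τ (x - u) ∂g) - ∑ j, θ j * F j| < Real.sqrt ε := by
    rw [hdiff]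
    calc |∫ u, (gaussDensity τ (x - u) - F (r u)) ∂g| ≤ C * δ * (g Set.univ).toReal := hfinal
      _ = C * δ := by simp
      _ < Real.sqrt ε := hkey
  have := (Real.lt_sqrt (abs_nonneg _)).mp hfinal2
  rwa [sq_abs] at this
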